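/- Let M be a symmetric n×n integer matrix whose quadratic enhancement is proper, i.e., q_M(v) ≡ 0 (mod 4) for every v ∈ (ℤ/2)ⁿ in the kernel of M mod 2, and let k be the ℤ/2-dimension of that kernel. Then there exists an integer β such that the Monsky sum satisfies λ(M) = (√2)^{n+k} · exp(iπβ/4). (The class of β in ℤ/8 is the Brown invariant of φ_M.) -/

import Mathlib

open Matrix

/-- The `{0,1}`-valued integer lift of a mod-2 vector. -/
def zlift {ι : Type*} (v : ι → ZMod 2) : ι → ℤ := fun i => ((v i).val : ℤ)

/-- The integral quadratic form `q_M(v) = ṽᵀ M ṽ` evaluated on the `{0,1}` lift of `v`. -/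
def qForm {ι : Type*} [Fintype ι] (M : Matrix ι ι ℤ) (v : ι → ZMod 2) : ℤ :=
  ∑ i, ∑ j, zlift v i * M i j * zlift v j

/-- The Monsky sum `λ(M) = Σ_{v ∈ (ℤ/2)ⁿ} i^{q_M(v)}`. -/
noncomputable def monsky {ι : Type*} [Fintype ι] [DecidableEq ι] (M : Matrix ι ι ℤ) : ℂ :=
  ∑ v : ι → ZMod 2, Complex.I ^ qForm M v

def bForm {ι : Type*} [Fintype ι] (M : Matrix ι ι ℤ) (v w : ι → ZMod 2) : ℤ :=
  ∑ i, ∑ j, zlift v i * M i j * zlift w j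

lemma zlift_add {ι : Type*} (v w : ι → ZMod 2) (i : ι) :
    zlift (v + w) i = zlift v i + zlift w i - 2 * (zlift v i * zlift w i) := by
  have : ∀ a b : ZMod 2, (((a+b).val : ℤ)) = (a.val : ℤ) + b.val - 2*((a.val:ℤ)*b.val) := by decide
  exact this (v i) (w i)

lemma I_zpow_eq_of_mod (a b : ℤ) (h : (a : ZMod 4) = b) : Complex.I ^ a = Complex.I ^ b := by
  have h0 : ((a - b : ℤ) : ZMod 4) = 0 := by push_cast; rw [h]; ring
  have h4 : ((4:ℕ):ℤ) ∣ a - b := (ZMod.intCast_zmod_eq_zero_iff_dvd _ 4).1 h0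
  obtain ⟨t, ht⟩ := h4
  have ha : a = b + 4 * t := by push_cast at ht; omega
  rw [ha, zpow_add₀ Complex.I_ne_zero, show (4:ℤ) * t = ((4:ℕ):ℤ) * t by norm_num,
    _root_.zpow_mul, zpow_natCast, Complex.I_pow_four, _root_.one_zpow, mul_one]

lemma I_zpow_two_mul (b : ℤ) : Complex.I ^ (2 * b) = (-1 : ℂ) ^ b := by
  rw [show (2:ℤ) = ((2:ℕ):ℤ) by norm_num, _root_.zpow_mul, zpow_natCast, Complex.I_sq]

lemma bForm_symm {ι : Type*} [Fintype ι] (M : Matrix ι ι ℤ) (hM : M.IsSymm)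
    (v w : ι → ZMod 2) : bForm M w v = bForm M v w := by
  unfold bForm
  rw [Finset.sum_comm]
  refine Finset.sum_congr rfl fun i _ => Finset.sum_congr rfl fun j _ => ?_
  rw [hM.apply i j]  -- hope: M j i = M i j?
  ring

lemma even_sum_symm {ι : Type*} [Fintype ι] [DecidableEq ι] (f : ι → ι → ℤ)
    (hsymm : ∀ i j, f i j = f j i) (hdiag : ∀ i, Even (f i i)) :
    Even (∑ i, ∑ j, f i j) := by
  have h0 : ((∑ i, ∑ j, f i j : ℤ) : ZMod 2) = 0 := by
    push_cast
    rw [← Finset.sum_product']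
    refine Finset.sum_involution (fun p _ => (p.2, p.1)) ?_ ?_ ?_ ?_
    · intro p _
      simp only
      rw [hsymm p.2 p.1]
      exact CharTwo.add_self_eq_zero _
    · intro p _ hne
      intro hc
      apply hne
      have h1 : p.1 = p.2 := (congrArg Prod.fst hc).symm
      rw [h1]
      have := hdiag p.2
      rw [even_iff_two_dvd] at this
      exact_mod_cast (ZMod.intCast_zmod_eq_zero_iff_dvd (f p.2 p.2) 2).2 (by exact_mod_cast this)
    · intro p _; exact Finset.mem_univ _
    · intro p _; rfl
  rw [even_iff_two_dvd]
  exact_mod_cast (ZMod.intCast_zmod_eq_zero_iff_dvd _ 2).1 h0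

lemma qForm_add_mod4 {ι : Type*} [Fintype ι] [DecidableEq ι] (M : Matrix ι ι ℤ) (hM : M.IsSymm)
    (v w : ι → ZMod 2) :
    ((qForm M (v + w) : ℤ) : ZMod 4)
      = (qForm M v : ZMod 4) + (qForm M w : ZMod 4) + 2 * (bForm M v w : ZMod 4) := by
  set a : ι → ℤ := zlift v with ha
  set b : ι → ℤ := zlift w with hb
  set d : ι → ι → ℤ := fun i j =>
    a i * b i * (a j + b j) + (a i + b i) * (a j * b j) - 2 * (a i * b i * (a j * b j)) with hd
  have key : ∀ i j, zlift (v + w) i * M i j * zlift (v + w) j =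
      (a i * M i j * a j) + (b i * M i j * b j) + (a i * M i j * b j) + (b i * M i j * a j)
        - 2 * (M i j * d i j) := by
    intro i j
    rw [zlift_add, zlift_add, hd]
    ring
  have hsplit : qForm M (v + w)
      = qForm M v + qForm M w + bForm M v w + bForm M w v - 2 * ∑ i, ∑ j, M i j * d i j := by
    unfold qForm bForm
    rw [Finset.sum_congr rfl fun i _ => Finset.sum_congr rfl fun j _ => key i j]
    simp only [Finset.sum_add_distrib, Finset.sum_sub_distrib, Finset.mul_sum]
    rfl
  have heven : Even (∑ i, ∑ j, M i j * d i j) := by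
    apply even_sum_symm
    · intro i j
      have hMij : M j i = M i j := hM.apply i j
      rw [hMij, hd]
      ring
    · intro i
      rw [hd]
      simp only
      exact ⟨M i i * (a i * b i * (a i + b i) - a i * b i * (a i * b i)), by ring⟩
  obtain ⟨s, hs⟩ := heven
  rw [hsplit, bForm_symm M hM v w, hs]
  push_cast
  ring_nf
  rw [show ((4:ZMod 4)) = ((4:ℕ) : ZMod 4) by norm_num, ZMod.natCast_self]
  ring

lemma sum_neg_one_zpow {n : ℕ} (c : Fin n → ℤ) :
    ∑ w : Fin n → ZMod 2, (-1 : ℂ) ^ (∑ i, zlift w i * c i)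
      = if ∀ i, Even (c i) then (2:ℂ)^n else 0 := by
  by_cases hc : ∀ i, Even (c i)
  · rw [if_pos hc]
    have hterm : ∀ w : Fin n → ZMod 2, (-1 : ℂ) ^ (∑ i, zlift w i * c i) = 1 := by
      intro w
      have he : Even (∑ i, zlift w i * c i) :=
        Finset.even_sum _ fun i _ => (hc i).mul_left _
      exact he.neg_one_zpow
    rw [Finset.sum_congr rfl fun w _ => hterm w]
    simp [Finset.card_univ, Fintype.card_fun]
  · rw [if_neg hc]
    push_neg at hc
    obtain ⟨i₀, hi₀⟩ := hc
    have hodd : Odd (c i₀) := Int.not_even_iff_odd.1 hi₀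
    refine Finset.sum_involution (fun w _ => Function.update w i₀ (w i₀ + 1)) ?_ ?_ ?_ ?_
    · intro w _
      have hupdate : ∀ i, zlift (Function.update w i₀ (w i₀ + 1)) i
          = if i = i₀ then 1 - zlift w i₀ else zlift w i := by
        intro i
        by_cases hi : i = i₀
        · subst hi
          rw [if_pos rfl]
          show (((Function.update w i (w i + 1)) i).val : ℤ) = 1 - ((w i).val : ℤ)
          rw [Function.update_self]
          exact (by decide : ∀ x : ZMod 2, (((x+1).val : ℤ)) = 1 - (x.val : ℤ)) (w i)
        · simp [zlift, Function.update_of_ne hi, hi]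
      have hsum : ∑ i, zlift (Function.update w i₀ (w i₀ + 1)) i * c i
          = (∑ i, zlift w i * c i) + (1 - 2 * zlift w i₀) * c i₀ := by
        have step : ∀ i : Fin n, zlift (Function.update w i₀ (w i₀ + 1)) i * c i
            = zlift w i * c i + (if i = i₀ then (1 - 2 * zlift w i₀) * c i₀ else 0) := by
          intro i
          rw [hupdate i]
          by_cases hi : i = i₀
          · subst hi; rw [if_pos rfl, if_pos rfl]; ring
          · rw [if_neg hi, if_neg hi]; ring
        rw [Finset.sum_congr rfl fun i _ => step i, Finset.sum_add_distrib,
          Finset.sum_ite_eq' Finset.univ i₀, if_pos (Finset.mem_univ _)]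
      rw [hsum]
      have hoddexp : Odd ((1 - 2 * zlift w i₀) * c i₀) := by
        refine Odd.mul ?_ hodd
        exact ⟨- zlift w i₀, by ring⟩
      rw [zpow_add₀ (by norm_num : (-1:ℂ) ≠ 0), hoddexp.neg_one_zpow]
      ring
    · intro w _ _ hcon
      have h2 := congrFun hcon i₀
      simp only [Function.update_self] at h2
      exact (by decide : ∀ x : ZMod 2, ¬(x + 1 = x)) (w i₀) h2
    · intro w _; exact Finset.mem_univ _
    · intro w _
      rw [Function.update_idem, Function.update_self]
      have : ∀ x : ZMod 2, x + 1 + 1 = x := by decide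
      rw [this]
      exact Function.update_eq_self _ _

lemma exp_pi_I_div_four : Complex.exp (Real.pi * Complex.I * 1 / 4)
    = (Real.sqrt 2 / 2 : ℝ) + (Real.sqrt 2 / 2 : ℝ) * Complex.I := by
  rw [show (Real.pi * Complex.I * 1 / 4 : ℂ) = ((Real.pi/4 : ℝ) : ℂ) * Complex.I by push_cast; ring,
    Complex.exp_mul_I, ← Complex.ofReal_cos, ← Complex.ofReal_sin,
    Real.cos_pi_div_four, Real.sin_pi_div_four]

lemma one_add_I_eq : (1 : ℂ) + Complex.I
    = (Real.sqrt 2 : ℂ) * Complex.exp (Real.pi * Complex.I * 1 / 4) := by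
  rw [exp_pi_I_div_four]
  have h2 : ((Real.sqrt 2 : ℝ) : ℂ) ^ 2 = 2 := by
    rw [sq]
    exact_mod_cast congrArg Complex.ofReal (Real.mul_self_sqrt (by norm_num : (0:ℝ) ≤ 2))
  push_cast
  field_simp
  ring_nf
  rw [h2]
  ring

lemma exp_piI0 : Complex.exp (Real.pi * Complex.I * (0:ℤ) / 4) = 1 := by
  norm_num

lemma exp_piI2 : Complex.exp (Real.pi * Complex.I * (2:ℤ) / 4) = Complex.I := by
  rw [show (Real.pi * Complex.I * (2:ℤ) / 4 : ℂ) = ((Real.pi/2 : ℝ) : ℂ) * Complex.I by push_cast; ring,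
    Complex.exp_mul_I, ← Complex.ofReal_cos, ← Complex.ofReal_sin,
    Real.cos_pi_div_two, Real.sin_pi_div_two]
  simp

lemma exp_piI4 : Complex.exp (Real.pi * Complex.I * (4:ℤ) / 4) = -1 := by
  rw [show (Real.pi * Complex.I * (4:ℤ) / 4 : ℂ) = Real.pi * Complex.I by push_cast; ring,
    Complex.exp_pi_mul_I]

lemma exp_piI6 : Complex.exp (Real.pi * Complex.I * (6:ℤ) / 4) = -Complex.I := by
  rw [show (Real.pi * Complex.I * (6:ℤ) / 4 : ℂ)
      = Real.pi * Complex.I + Real.pi * Complex.I * (2:ℤ) / 4 by push_cast; ring,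
    Complex.exp_add, Complex.exp_pi_mul_I, exp_piI2]
  ring

lemma gauss_norm_pow_two : ∀ (m : ℕ) (x y : ℤ), x^2 + y^2 = 2^m →
    ∃ β : ℤ, (x:ℂ) + y * Complex.I
      = ((Real.sqrt 2 : ℝ) : ℂ) ^ m * Complex.exp (Real.pi * Complex.I * β / 4) := by
  intro m
  induction m with
  | zero =>
    intro x y h
    have hx1 : -1 ≤ x := by nlinarith [sq_nonneg y, sq_nonneg (x+1)]
    have hx2 : x ≤ 1 := by nlinarith [sq_nonneg y, sq_nonneg (x-1)]
    have hy1 : -1 ≤ y := by nlinarith [sq_nonneg x, sq_nonneg (y+1)]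
    have hy2 : y ≤ 1 := by nlinarith [sq_nonneg x, sq_nonneg (y-1)]
    interval_cases x <;> interval_cases y
    · norm_num at h
    · exact ⟨4, by rw [exp_piI4]; push_cast; ring⟩
    · norm_num at h
    · exact ⟨6, by rw [exp_piI6]; push_cast; ring⟩
    · norm_num at h
    · exact ⟨2, by rw [exp_piI2]; push_cast; ring⟩
    · norm_num at h
    · exact ⟨0, by rw [exp_piI0]; push_cast; ring⟩
    · norm_num at h
  | succ m ih =>
    intro x y h
    have h2 : Even (x^2 + y^2) := by rw [h]; exact ⟨2^m, by ring⟩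
    have hxy : Even (x + y) := by
      rw [Int.even_add] at h2 ⊢
      rwa [Int.even_pow' (by norm_num), Int.even_pow' (by norm_num)] at h2
    obtain ⟨a, haa⟩ := hxy
    set b : ℤ := y - a with hb
    have hx : x = a - b := by omega
    have hy : y = a + b := by omega
    rw [hx, hy] at h ⊢
    have hab : a^2 + b^2 = 2^m := by
      have expand : (a-b)^2 + (a+b)^2 = 2*(a^2+b^2) := by ring
      have h' : 2*(a^2+b^2) = 2^m * 2 := by rw [← expand, h, pow_succ]
      linarith
    obtain ⟨β, hβ⟩ := ih a b hab
    refine ⟨β + 1, ?_⟩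
    have key : (((a - b : ℤ)):ℂ) + ((a + b : ℤ):ℂ) * Complex.I
        = (1 + Complex.I) * ((a:ℂ) + (b:ℂ) * Complex.I) := by push_cast; ring_nf; rw [Complex.I_sq]; ring
    rw [key, hβ, one_add_I_eq, pow_succ]
    rw [show ((Real.sqrt 2 : ℝ):ℂ) * Complex.exp (Real.pi * Complex.I * 1 / 4) *
        (((Real.sqrt 2:ℝ):ℂ) ^ m * Complex.exp (Real.pi * Complex.I * β / 4))
        = ((Real.sqrt 2:ℝ):ℂ) ^ m * ((Real.sqrt 2:ℝ):ℂ) *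
          (Complex.exp (Real.pi * Complex.I * 1 / 4) * Complex.exp (Real.pi * Complex.I * β / 4)) by ring,
      ← Complex.exp_add]
    congr 1
    push_cast
    ring

lemma bForm_eq {n : ℕ} (M : Matrix (Fin n) (Fin n) ℤ) (w u : Fin n → ZMod 2) :
    bForm M w u = ∑ i, zlift w i * (∑ j, M i j * zlift u j) := by
  unfold bForm
  refine Finset.sum_congr rfl fun i _ => ?_
  rw [Finset.mul_sum]
  exact Finset.sum_congr rfl fun j _ => by ring

lemma ker_cond_iff {n : ℕ} (M : Matrix (Fin n) (Fin n) ℤ) (u : Fin n → ZMod 2) :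
    (∀ i, Even (∑ j, M i j * zlift u j)) ↔ (M.map (Int.cast : ℤ → ZMod 2)).mulVec u = 0 := by
  rw [funext_iff]
  refine forall_congr' fun i => ?_
  have hcast : ((∑ j, M i j * zlift u j : ℤ) : ZMod 2)
      = (M.map (Int.cast : ℤ → ZMod 2)).mulVec u i := by
    push_cast
    refine Finset.sum_congr rfl fun j _ => ?_
    simp [zlift, Matrix.map_apply, ZMod.natCast_val, ZMod.cast_id]
  constructor
  · intro he
    have h2 : ((2:ℕ):ℤ) ∣ ∑ j, M i j * zlift u j := by exact_mod_cast (even_iff_two_dvd).1 (he)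
    have := (ZMod.intCast_zmod_eq_zero_iff_dvd _ 2).2 h2
    rw [hcast] at this
    simpa using this
  · intro h0
    have : ((∑ j, M i j * zlift u j : ℤ) : ZMod 2) = 0 := by rw [hcast]; simpa using h0
    have := (ZMod.intCast_zmod_eq_zero_iff_dvd _ 2).1 this
    rw [even_iff_two_dvd]
    exact_mod_cast this

lemma monsky_norm {n : ℕ} (M : Matrix (Fin n) (Fin n) ℤ) (hM : M.IsSymm)
    (hproper : ∀ v : Fin n → ZMod 2,
      (M.map (Int.cast : ℤ → ZMod 2)).mulVec v = 0 → ((qForm M v : ℤ) : ZMod 4) = 0)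
    (k : ℕ)
    (hk : k = Module.finrank (ZMod 2)
      (LinearMap.ker (Matrix.mulVecLin (M.map (Int.cast : ℤ → ZMod 2))))) :
    monsky M * (starRingEnd ℂ) (monsky M) = (2:ℂ) ^ (n + k) := by
  unfold monsky
  rw [map_sum, Finset.sum_mul_sum]
  have hterm : ∀ v w : Fin n → ZMod 2,
      Complex.I ^ qForm M v * (starRingEnd ℂ) (Complex.I ^ qForm M w)
        = Complex.I ^ (qForm M v - qForm M w) := by
    intro v w
    rw [map_zpow₀, Complex.conj_I, ← Complex.inv_I, _root_.inv_zpow, ← _root_.zpow_neg,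
      ← zpow_add₀ Complex.I_ne_zero, sub_eq_add_neg]
  simp only [hterm]
  rw [Finset.sum_comm]
  have hinner : ∀ w : Fin n → ZMod 2,
      ∑ v : Fin n → ZMod 2, Complex.I ^ (qForm M v - qForm M w)
        = ∑ u : Fin n → ZMod 2, Complex.I ^ qForm M u * (-1:ℂ) ^ (bForm M w u) := by
    intro w
    rw [← Equiv.sum_comp (Equiv.addLeft w) (fun v => Complex.I ^ (qForm M v - qForm M w))]
    refine Finset.sum_congr rfl fun u _ => ?_
    have hadd : Equiv.addLeft w u = w + u := rfl
    rw [hadd]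
    have hcong : ((qForm M (w + u) - qForm M w : ℤ) : ZMod 4)
        = ((qForm M u + 2 * bForm M w u : ℤ) : ZMod 4) := by
      push_cast
      rw [show ((qForm M (w+u) : ℤ) : ZMod 4) - (qForm M w : ZMod 4)
          = ((qForm M (w+u) : ℤ) : ZMod 4) - (qForm M w : ZMod 4) from rfl]
      rw [qForm_add_mod4 M hM w u]
      ring
    rw [I_zpow_eq_of_mod _ _ hcong, zpow_add₀ Complex.I_ne_zero, I_zpow_two_mul]
  rw [Finset.sum_congr rfl fun w _ => hinner w, Finset.sum_comm]
  have hout : ∀ u : Fin n → ZMod 2,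
      ∑ w : Fin n → ZMod 2, Complex.I ^ qForm M u * (-1:ℂ) ^ (bForm M w u)
        = if (M.map (Int.cast : ℤ → ZMod 2)).mulVec u = 0 then Complex.I ^ qForm M u * (2:ℂ)^n
          else 0 := by
    intro u
    rw [← Finset.mul_sum]
    rw [Finset.sum_congr rfl fun w _ => by rw [bForm_eq M w u]]
    rw [sum_neg_one_zpow (fun i => ∑ j, M i j * zlift u j)]
    by_cases hcond : (M.map (Int.cast : ℤ → ZMod 2)).mulVec u = 0
    · rw [if_pos hcond, if_pos ((ker_cond_iff M u).2 hcond)]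
    · rw [if_neg hcond, if_neg (fun he => hcond ((ker_cond_iff M u).1 he)), mul_zero]
  rw [Finset.sum_congr rfl fun u _ => hout u]
  have hone : ∀ u : Fin n → ZMod 2, (M.map (Int.cast : ℤ → ZMod 2)).mulVec u = 0 →
      Complex.I ^ qForm M u = 1 := by
    intro u hu
    have := hproper u hu
    rw [show ((0 : ZMod 4)) = ((0:ℤ) : ZMod 4) by norm_num] at this
    rw [I_zpow_eq_of_mod _ _ this, zpow_zero]
  have hsimp : ∀ u : Fin n → ZMod 2,
      (if (M.map (Int.cast : ℤ → ZMod 2)).mulVec u = 0 then Complex.I ^ qForm M u * (2:ℂ)^n else 0)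
        = if (M.map (Int.cast : ℤ → ZMod 2)).mulVec u = 0 then (2:ℂ)^n else 0 := by
    intro u
    by_cases hcond : (M.map (Int.cast : ℤ → ZMod 2)).mulVec u = 0
    · rw [if_pos hcond, if_pos hcond, hone u hcond, one_mul]
    · rw [if_neg hcond, if_neg hcond]
  rw [Finset.sum_congr rfl fun u _ => hsimp u]
  rw [Finset.sum_ite, Finset.sum_const, Finset.sum_const_zero, add_zero]
  have hcard : (Finset.univ.filter
      (fun u : Fin n → ZMod 2 => (M.map (Int.cast : ℤ → ZMod 2)).mulVec u = 0)).card = 2^k := by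
    haveI : Fintype ↥(LinearMap.ker (Matrix.mulVecLin (M.map (Int.cast : ℤ → ZMod 2)))) :=
      Fintype.ofFinite _
    rw [← Fintype.card_subtype]
    have e : {u : Fin n → ZMod 2 // (M.map (Int.cast : ℤ → ZMod 2)).mulVec u = 0}
        ≃ ↥(LinearMap.ker (Matrix.mulVecLin (M.map (Int.cast : ℤ → ZMod 2)))) :=
      Equiv.subtypeEquivRight (fun u => by simp [LinearMap.mem_ker, Matrix.mulVecLin_apply])
    rw [Fintype.card_congr e, Module.card_eq_pow_finrank (K := ZMod 2), ZMod.card, ← hk]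
  rw [hcard]
  rw [nsmul_eq_mul]
  push_cast
  rw [pow_add]
  ring

lemma I_zpow_cases (q : ℤ) : Complex.I ^ q = 1 ∨ Complex.I ^ q = Complex.I
    ∨ Complex.I ^ q = -1 ∨ Complex.I ^ q = -Complex.I := by
  have hmod : Complex.I ^ q = Complex.I ^ (q % (4:ℕ)) :=
    I_zpow_eq_of_mod _ _ (by rw [ZMod.intCast_mod])
  have h0 : 0 ≤ q % (4:ℕ) := Int.emod_nonneg _ (by norm_num)
  have h4 : q % (4:ℕ) < 4 := Int.emod_lt_of_pos _ (by norm_num)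
  set r := q % (4:ℕ) with hr
  interval_cases r
  · left; rw [hmod]; exact zpow_zero _
  · right; left; rw [hmod]; exact zpow_one _
  · right; right; left
    rw [hmod, show ((2:ℤ)) = ((2:ℕ):ℤ) from rfl, zpow_natCast, Complex.I_sq]
  · right; right; right
    rw [hmod, show ((3:ℤ)) = ((3:ℕ):ℤ) from rfl, zpow_natCast, pow_succ, Complex.I_sq]
    ring

lemma monsky_int {ι : Type*} [Fintype ι] [DecidableEq ι] (M : Matrix ι ι ℤ) :
    ∃ x y : ℤ, monsky M = (x:ℂ) + (y:ℂ) * Complex.I := by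
  unfold monsky
  refine Finset.sum_induction _ (fun z => ∃ x y : ℤ, z = (x:ℂ) + (y:ℂ) * Complex.I) ?_ ?_ ?_
  · rintro a b ⟨x1, y1, rfl⟩ ⟨x2, y2, rfl⟩
    exact ⟨x1 + x2, y1 + y2, by push_cast; ring⟩
  · exact ⟨0, 0, by norm_num⟩
  · intro v _
    rcases I_zpow_cases (qForm M v) with h | h | h | h
    · exact ⟨1, 0, by rw [h]; norm_num⟩
    · exact ⟨0, 1, by rw [h]; norm_num⟩
    · exact ⟨-1, 0, by rw [h]; push_cast; ring⟩
    · exact ⟨0, -1, by rw [h]; push_cast; ring⟩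

/-- If the quadratic enhancement of a symmetric integer matrix `M` is proper,
and `k` is the `ℤ/2`-dimension of the kernel of `M` mod 2, then there is an integer `β`
(the Brown invariant) with `λ(M) = (√2)^(n+k) · exp(iπβ/4)`. -/
theorem monsky_of_proper {n : ℕ} (M : Matrix (Fin n) (Fin n) ℤ) (hM : M.IsSymm)
    (hproper : ∀ v : Fin n → ZMod 2,
      (M.map (Int.cast : ℤ → ZMod 2)).mulVec v = 0 → ((qForm M v : ℤ) : ZMod 4) = 0)
    (k : ℕ)
    (hk : k = Module.finrank (ZMod 2)
      (LinearMap.ker (Matrix.mulVecLin (M.map (Int.cast : ℤ → ZMod 2))))) :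
    ∃ β : ℤ, monsky M
      = ((Real.sqrt 2 : ℝ) : ℂ) ^ (n + k) * Complex.exp (Real.pi * Complex.I * β / 4) := by
  obtain ⟨x, y, hxy⟩ := monsky_int M
  have hnorm := monsky_norm M hM hproper k hk
  have hstar : (starRingEnd ℂ) (monsky M) = (x:ℂ) - (y:ℂ) * Complex.I := by
    rw [hxy, map_add, _root_.map_mul, map_intCast, map_intCast, Complex.conj_I]
    ring
  have hsq : ((x^2 + y^2 : ℤ) : ℂ) = (2:ℂ)^(n+k) := by
    rw [← hnorm, hstar, hxy]
    push_cast
    ring_nf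
    rw [Complex.I_sq]
    ring
  have hsqZ : x^2 + y^2 = 2^(n+k) := by
    have h2 : ((x^2+y^2 : ℤ):ℂ) = ((2^(n+k) : ℤ) : ℂ) := by rw [hsq]; push_cast; ring
    exact_mod_cast h2
  obtain ⟨β, hβ⟩ := gauss_norm_pow_two (n+k) x y hsqZ
  exact ⟨β, by rw [hxy, hβ]⟩
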